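/- Fix an integer k ≥ 2 and a real σ > 0, and let ε > 0. If σ ≥ (k−1)/(kε), then the discrete exponential randomized-response mechanism satisfies ε-local differential privacy: for all t, t', u ∈ {1,…,k}, P_σ(t,u) ≤ e^ε · P_σ(t',u). -/

import Mathlib

/-- Unnormalized weight of the discrete exponential randomized-response
mechanism on `{1,…,k}`: `Q_σ(t,u) = exp(−|u−t|/(kσ))`. -/
noncomputable def rrWeight (k : ℕ) (σ : ℝ) (t u : ℕ) : ℝ :=
  Real.exp (-|(u : ℝ) - (t : ℝ)| / (k * σ))

/-- Normalizer `C_σ(t) = Σ_{v=1}^k exp(−|v−t|/(kσ))`. -/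
noncomputable def rrNorm (k : ℕ) (σ : ℝ) (t : ℕ) : ℝ :=
  ∑ v ∈ Finset.Icc 1 k, rrWeight k σ t v

/-- Randomization probability `P_σ(t,u) = Q_σ(t,u) / C_σ(t)`. -/
noncomputable def rrProb (k : ℕ) (σ : ℝ) (t u : ℕ) : ℝ :=
  rrWeight k σ t u / rrNorm k σ t

/-- if `σ ≥ (k−1)/(kε)` then the mechanism satisfies `ε`-LDP:
`P_σ(t,u) ≤ e^ε · P_σ(t',u)` for all `t, t', u ∈ {1,…,k}`. -/
theorem rr_ldp (k : ℕ) (hk : 2 ≤ k) (σ ε : ℝ) (hσ : 0 < σ) (hε : 0 < ε)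
    (hσε : σ ≥ ((k : ℝ) - 1) / (k * ε)) :
    ∀ t ∈ Finset.Icc 1 k, ∀ t' ∈ Finset.Icc 1 k, ∀ u ∈ Finset.Icc 1 k,
      rrProb k σ t u ≤ Real.exp ε * rrProb k σ t' u := by
  intro t ht t' ht' u hu
  rw [Finset.mem_Icc] at ht ht' hu
  obtain ⟨ht1, ht2⟩ := ht
  obtain ⟨ht'1, ht'2⟩ := ht'
  obtain ⟨hu1, hu2⟩ := hu
  have hkR : (0:ℝ) < (k:ℝ) := by positivity
  have hkσ : (0:ℝ) < (k:ℝ) * σ := by positivity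
  set r : ℝ := Real.exp (-(1/((k:ℝ)*σ))) with hrdef
  have hr0 : 0 < r := Real.exp_pos _
  have hr1 : r ≤ 1 := Real.exp_le_one_iff.mpr (by
    have : (0:ℝ) < 1/((k:ℝ)*σ) := by positivity
    linarith)
  have hmono : ∀ {a b : ℕ}, a ≤ b → r ^ b ≤ r ^ a :=
    fun h => pow_le_pow_of_le_one hr0.le hr1 h
  -- weight formula
  have hw : ∀ a b : ℕ, rrWeight k σ a b = r ^ (Nat.dist b a) := by
    intro a b
    rw [rrWeight, hrdef, ← Real.exp_nat_mul]
    congr 1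
    have habs : |(b:ℝ) - (a:ℝ)| = (Nat.dist b a : ℝ) := by
      rcases le_total a b with h | h
      · rw [Nat.dist_eq_sub_of_le_right h,
          abs_of_nonneg (by simp only [sub_nonneg]; exact_mod_cast h)]
        push_cast [h]; ring
      · rw [Nat.dist_eq_sub_of_le h,
          abs_of_nonpos (by simp only [sub_nonpos]; exact_mod_cast h)]
        push_cast [h]; ring
    rw [habs]
    field_simp
  -- norm formula
  have hnorm : ∀ s : ℕ, 1 ≤ s → s ≤ k → rrNorm k σ s
      = (∑ i ∈ Finset.range s, r ^ i) + ∑ i ∈ Finset.range (k - s), r ^ (i + 1) := by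
    intro s hs1 hsk
    rw [rrNorm,
      show Finset.Icc 1 k = Finset.Ico 1 (k+1) from (Finset.Ico_add_one_right_eq_Icc 1 k).symm,
      Finset.sum_Ico_eq_sum_range, show k + 1 - 1 = s + (k - s) by omega,
      Finset.sum_range_add]
    congr 1
    · rw [← Finset.sum_range_reflect (fun i => rrWeight k σ s (1 + i)) s]
      refine Finset.sum_congr rfl fun i hi => ?_
      rw [Finset.mem_range] at hi
      rw [hw]; congr 1
      simp only [Nat.dist]; omega
    · refine Finset.sum_congr rfl fun i hi => ?_
      rw [hw]; congr 1
      simp only [Nat.dist]; omega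
  set S : ℝ := ∑ i ∈ Finset.range k, r ^ i with hSdef
  have hS0 : 0 < S :=
    Finset.sum_pos (fun i _ => pow_pos hr0 i) ⟨0, Finset.mem_range.mpr (by omega)⟩
  have hSsplit : ∀ a b : ℕ, a + b = k →
      S = (∑ i ∈ Finset.range a, r ^ i) + ∑ i ∈ Finset.range b, r ^ (a + i) := by
    intro a b hab
    rw [hSdef, ← hab, Finset.sum_range_add]
  -- Lemma A : S ≤ rrNorm s
  have hA : ∀ s : ℕ, 1 ≤ s → s ≤ k → S ≤ rrNorm k σ s := by
    intro s hs1 hsk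
    rw [hnorm s hs1 hsk, hSsplit s (k - s) (by omega)]
    exact add_le_add_right (Finset.sum_le_sum fun i _ => hmono (by omega)) _
  have hNt : 0 < rrNorm k σ t := lt_of_lt_of_le hS0 (hA t ht1 ht2)
  have hNt' : 0 < rrNorm k σ t' := lt_of_lt_of_le hS0 (hA t' ht'1 ht'2)
  -- Lemma B : r ^ m * rrNorm t' ≤ S, where m = min (t'-1) (k-t')
  have hB : r ^ (min (t' - 1) (k - t')) * rrNorm k σ t' ≤ S := by
    rw [hnorm t' ht'1 ht'2, mul_add, Finset.mul_sum, Finset.mul_sum]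
    simp only [← pow_add]
    rcases le_or_gt (t' - 1) (k - t') with hc | hc
    · rw [min_eq_left hc, hSsplit t' (k - t') (by omega)]
      refine add_le_add (Finset.sum_le_sum fun i _ => hmono (by omega)) ?_
      refine le_of_eq (Finset.sum_congr rfl fun i _ => ?_)
      congr 1
      omega
    · rw [min_eq_right hc.le, hSsplit (k - t') t' (by omega), add_comm]
      exact add_le_add (Finset.sum_le_sum fun i _ => hmono (by omega)) le_rfl
  -- bound on the distance
  have hdm : Nat.dist u t' + min (t' - 1) (k - t') ≤ k - 1 := by
    simp only [Nat.dist]; omega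
  -- exp ε * r ^ (k-1) ≥ 1
  have hεσ : ((k:ℝ) - 1) / ((k:ℝ) * σ) ≤ ε := by
    rw [div_le_iff₀ hkσ]
    rw [ge_iff_le, div_le_iff₀ (by positivity)] at hσε
    nlinarith
  have hkey : 1 ≤ Real.exp ε * r ^ (k - 1) := by
    rw [hrdef, ← Real.exp_nat_mul, ← Real.exp_add]
    apply Real.one_le_exp_iff.mpr
    have hcast : ((k - 1 : ℕ) : ℝ) = (k:ℝ) - 1 := by
      have h1k : 1 ≤ k := by omega
      push_cast [h1k]; ring
    have heq : ε + ((k - 1 : ℕ) : ℝ) * -(1 / ((k:ℝ) * σ))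
        = ε - ((k:ℝ) - 1) / ((k:ℝ) * σ) := by rw [hcast]; ring
    rw [heq]
    linarith
  have h1 : 1 ≤ Real.exp ε * r ^ (Nat.dist u t' + min (t' - 1) (k - t')) :=
    hkey.trans (mul_le_mul_of_nonneg_left (hmono hdm) (Real.exp_pos ε).le)
  -- key : rrNorm t' ≤ exp ε * r ^ dist u t' * S
  have hkey2 : rrNorm k σ t' ≤ Real.exp ε * r ^ (Nat.dist u t') * S := by
    calc rrNorm k σ t' = 1 * rrNorm k σ t' := (one_mul _).symm
    _ ≤ (Real.exp ε * r ^ (Nat.dist u t' + min (t' - 1) (k - t'))) * rrNorm k σ t' :=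
        mul_le_mul_of_nonneg_right h1 hNt'.le
    _ = Real.exp ε * r ^ (Nat.dist u t') * (r ^ (min (t' - 1) (k - t')) * rrNorm k σ t') := by
        rw [pow_add]; ring
    _ ≤ Real.exp ε * r ^ (Nat.dist u t') * S :=
        mul_le_mul_of_nonneg_left hB (by positivity)
  -- final chain
  have hupper : rrProb k σ t u ≤ 1 / S := by
    rw [rrProb, hw]
    exact div_le_div₀ zero_le_one (pow_le_one₀ hr0.le hr1) hS0 (hA t ht1 ht2)
  have hlower : 1 / S ≤ Real.exp ε * rrProb k σ t' u := by
    rw [rrProb, hw, mul_div_assoc', div_le_div_iff₀ hS0 hNt', one_mul]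
    exact hkey2.trans_eq (by ring)
  exact hupper.trans hlower
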